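/- Let m ≥ 2 and n be positive integers, let π ∈ S_n have order exactly m, and let σ ∈ S_n and s ∈ ℤ_m. Then, in the complex vector space with standard basis {e_r ⊗ e_τ : r ∈ ℤ_m, τ ∈ S_n}, the identity (1/m^{3/2}) Σ_{r,r′,t ∈ ℤ_m} ω_m^{st + rr′} e_{r′} ⊗ e_{σπ^{r+t mod m}} = e_s ⊗ Φ_{π,s}^σ holds. (This character-sum identity is the core computation of the Generalized Controlled-π Test: measuring the first register yields the message s with certainty.) -/

import Mathlib

open Finset

/-- The vector `Φ_{π,s}^σ = (1/√m) Σ_{t=0}^{m−1} ω_m^{st} e_{σπ^t}` in `ℂ^{S_n}`,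
where `ω_m = e^{2πi/m}`. -/
noncomputable def PhiVec (n m : ℕ) (π σ : Equiv.Perm (Fin n)) (s : ZMod m) :
    Equiv.Perm (Fin n) → ℂ :=
  fun τ => (1 / (Real.sqrt m : ℂ)) *
    ∑ t ∈ Finset.range m,
      Complex.exp (2 * Real.pi * Complex.I / m) ^ (s.val * t) *
        (if τ = σ * π ^ t then 1 else 0)

/-- The core character-sum identity of the Generalized Controlled-`π` Test: in
`ℂ^{ℤ_m × S_n}`,
`(1/m^{3/2}) Σ_{r,r′,t ∈ ℤ_m} ω_m^{st+rr′} e_{r′} ⊗ e_{σπ^{r+t mod m}} = e_s ⊗ Φ_{π,s}^σ`,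
so measuring the first register yields `s` with certainty. -/
theorem generalized_controlled_perm_test (n m : ℕ) (hn : 0 < n) (hm : 2 ≤ m)
    (π : Equiv.Perm (Fin n)) (hπ : orderOf π = m) (σ : Equiv.Perm (Fin n))
    (s : ZMod m) :
    (fun p : ZMod m × Equiv.Perm (Fin n) =>
        (1 / ((m : ℂ) * (Real.sqrt m : ℂ))) *
          ∑ r ∈ Finset.range m, ∑ r' ∈ Finset.range m, ∑ t ∈ Finset.range m,
            Complex.exp (2 * Real.pi * Complex.I / m) ^ (s.val * t + r * r') *
              (if p = ((r' : ZMod m), σ * π ^ ((r + t) % m)) then 1 else 0)) =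
      fun p : ZMod m × Equiv.Perm (Fin n) =>
        (if p.1 = s then 1 else 0) * PhiVec n m π σ s p.2 := by
  have hm0 : m ≠ 0 := by omega
  haveI : NeZero m := ⟨hm0⟩
  set ζ : ℂ := Complex.exp (2 * Real.pi * Complex.I / m) with hζdef
  have hprim : IsPrimitiveRoot ζ m := Complex.isPrimitiveRoot_exp m hm0
  have hζm : ζ ^ m = 1 := hprim.pow_eq_one
  have hcast : ∀ x y : ℕ, (x : ZMod m) = (y : ZMod m) → ζ ^ x = ζ ^ y := by
    intro x y h
    have hxy : x % m = y % m := (ZMod.natCast_eq_natCast_iff x y m).mp h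
    rw [← Nat.mod_add_div x m, ← Nat.mod_add_div y m, pow_add, pow_add, pow_mul, pow_mul,
      hζm, one_pow, one_pow, mul_one, mul_one, hxy]
  have hgeom : ∀ k : ℕ, (∑ r ∈ range m, ζ ^ (r * k)) = if (k : ZMod m) = 0 then (m : ℂ) else 0 := by
    intro k
    by_cases hk : (k : ZMod m) = 0
    · rw [if_pos hk]
      have hdvd : m ∣ k := (ZMod.natCast_eq_zero_iff k m).mp hk
      have h1 : ζ ^ k = 1 := (hprim.pow_eq_one_iff_dvd k).mpr hdvd
      calc (∑ r ∈ range m, ζ ^ (r * k)) = ∑ _r ∈ range m, (1 : ℂ) := by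
            refine sum_congr rfl fun r _ => ?_
            rw [mul_comm, pow_mul, h1, one_pow]
        _ = m := by simp
    · rw [if_neg hk]
      have hnd : ¬ m ∣ k := fun h => hk ((ZMod.natCast_eq_zero_iff k m).mpr h)
      have h1 : ζ ^ k ≠ 1 := fun h => hnd ((hprim.pow_eq_one_iff_dvd k).mp h)
      calc (∑ r ∈ range m, ζ ^ (r * k)) = ∑ r ∈ range m, (ζ ^ k) ^ r := by
            refine sum_congr rfl fun r _ => ?_
            rw [mul_comm, pow_mul]
        _ = ((ζ ^ k) ^ m - 1) / (ζ ^ k - 1) := geom_sum_eq h1 m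
        _ = 0 := by
            rw [← pow_mul, mul_comm k m, pow_mul, hζm, one_pow]
            simp
  funext p
  obtain ⟨a, τ⟩ := p
  simp only [PhiVec, ← hζdef]
  have hstep1 : ∀ r : ℕ,
      (∑ r' ∈ range m, ∑ t ∈ range m,
        ζ ^ (s.val * t + r * r') *
          (if ((a, τ) : ZMod m × Equiv.Perm (Fin n)) = ((r' : ZMod m), σ * π ^ ((r + t) % m))
            then 1 else 0))
      = (∑ r' ∈ range m, ζ ^ (r * r') * (if a = (r' : ZMod m) then 1 else 0))
        * ∑ t ∈ range m, ζ ^ (s.val * t) * (if τ = σ * π ^ ((r + t) % m) then 1 else 0) := by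
    intro r
    rw [Finset.sum_mul_sum]
    refine sum_congr rfl fun r' _ => sum_congr rfl fun t _ => ?_
    by_cases h1 : a = (r' : ZMod m) <;> by_cases h2 : τ = σ * π ^ ((r + t) % m) <;>
      simp [h1, h2, Prod.ext_iff, pow_add] <;> ring
  have hA : ∀ r : ℕ,
      (∑ r' ∈ range m, ζ ^ (r * r') * (if a = (r' : ZMod m) then 1 else 0)) = ζ ^ (r * a.val) := by
    intro r
    rw [Finset.sum_eq_single a.val]
    · have hv : ((a.val : ℕ) : ZMod m) = a := ZMod.natCast_rightInverse a
      simp [hv]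
    · intro b hb hne
      have hb' : b < m := mem_range.mp hb
      have hab : ¬ (a = (b : ZMod m)) := fun h =>
        hne (by rw [h, ZMod.val_cast_of_lt hb'])
      simp [hab]
    · intro h
      exact absurd (mem_range.mpr (ZMod.val_lt a)) h
  by_cases hEx : ∃ u, u < m ∧ τ = σ * π ^ u
  · obtain ⟨u, hu, hτ⟩ := hEx
    have hiff : ∀ x : ℕ, τ = σ * π ^ x ↔ x % m = u := by
      intro x
      rw [hτ, mul_right_inj, pow_eq_pow_iff_modEq, hπ, Nat.ModEq, Nat.mod_eq_of_lt hu]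
      exact eq_comm
    have hB : ∀ r, r < m →
        (∑ t ∈ range m, ζ ^ (s.val * t) * (if τ = σ * π ^ ((r + t) % m) then 1 else 0))
          = ζ ^ (s.val * ((u + (m - r)) % m)) := by
      intro r hr
      rw [Finset.sum_eq_single ((u + (m - r)) % m)]
      · rw [if_pos, mul_one]
        rw [hiff, Nat.mod_mod_of_dvd _ dvd_rfl, Nat.add_mod_mod]
        have h1 : r + (u + (m - r)) = u + m := by omega
        rw [h1, Nat.add_mod_right]
        exact Nat.mod_eq_of_lt hu
      · intro t ht hne
        rw [if_neg, mul_zero]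
        rw [hiff, Nat.mod_mod_of_dvd _ dvd_rfl]
        intro hcond
        apply hne
        have ht' : t < m := mem_range.mp ht
        rw [← hcond, Nat.mod_add_mod]
        have h2 : r + t + (m - r) = t + m := by omega
        rw [h2, Nat.add_mod_right]
        exact (Nat.mod_eq_of_lt ht').symm
      · intro h
        exact absurd (mem_range.mpr (Nat.mod_lt _ (by omega))) h
    have hsv : s.val < m := ZMod.val_lt s
    have hS : (∑ r ∈ range m, ζ ^ (r * a.val) * ζ ^ (s.val * ((u + (m - r)) % m)))
        = ζ ^ (s.val * u) * (if a = s then (m : ℂ) else 0) := by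
      have hterm : ∀ r ∈ range m,
          ζ ^ (r * a.val) * ζ ^ (s.val * ((u + (m - r)) % m))
            = ζ ^ (s.val * u) * ζ ^ (r * (a.val + (m - s.val))) := by
        intro r hrm
        have hr : r < m := mem_range.mp hrm
        rw [← pow_add, ← pow_add]
        apply hcast
        rw [Nat.cast_add, Nat.cast_add, Nat.cast_mul, Nat.cast_mul, Nat.cast_mul, Nat.cast_mul,
          ZMod.natCast_mod, Nat.cast_add, Nat.cast_sub hr.le, Nat.cast_add,
          Nat.cast_sub hsv.le, ZMod.natCast_self]
        ring
      have hcond : ((a.val + (m - s.val) : ℕ) : ZMod m) = a - s := by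
        rw [Nat.cast_add, Nat.cast_sub hsv.le, ZMod.natCast_self,
          ZMod.natCast_rightInverse a, ZMod.natCast_rightInverse s]
        ring
      calc (∑ r ∈ range m, ζ ^ (r * a.val) * ζ ^ (s.val * ((u + (m - r)) % m)))
          = ∑ r ∈ range m, ζ ^ (s.val * u) * ζ ^ (r * (a.val + (m - s.val))) :=
            sum_congr rfl hterm
        _ = ζ ^ (s.val * u) * ∑ r ∈ range m, ζ ^ (r * (a.val + (m - s.val))) := by rw [mul_sum]
        _ = ζ ^ (s.val * u) * (if a = s then (m : ℂ) else 0) := by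
            rw [hgeom]
            simp only [hcond, sub_eq_zero]
    have hR : (∑ t ∈ range m, ζ ^ (s.val * t) * (if τ = σ * π ^ t then 1 else 0))
        = ζ ^ (s.val * u) := by
      rw [Finset.sum_eq_single u]
      · rw [if_pos, mul_one]
        rw [hiff]
        exact Nat.mod_eq_of_lt hu
      · intro t ht hne
        rw [if_neg, mul_zero]
        rw [hiff, Nat.mod_eq_of_lt (mem_range.mp ht)]
        exact hne
      · intro h
        exact absurd (mem_range.mpr hu) h
    have hLHS : (∑ r ∈ range m, ∑ r' ∈ range m, ∑ t ∈ range m,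
        ζ ^ (s.val * t + r * r') *
          (if ((a, τ) : ZMod m × Equiv.Perm (Fin n)) = ((r' : ZMod m), σ * π ^ ((r + t) % m))
            then 1 else 0))
        = ζ ^ (s.val * u) * (if a = s then (m : ℂ) else 0) := by
      rw [← hS]
      refine sum_congr rfl fun r hr => ?_
      rw [hstep1 r, hA r, hB r (mem_range.mp hr)]
    rw [hLHS, hR]
    have hmne : (m : ℂ) ≠ 0 := Nat.cast_ne_zero.mpr hm0
    have hsq : (Real.sqrt m : ℂ) ≠ 0 := by
      simp only [ne_eq, Complex.ofReal_eq_zero]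
      positivity
    by_cases has : a = s
    · simp only [has, if_pos rfl, ↓reduceIte]
      field_simp
    · simp [has]
  · push_neg at hEx
    have hLHS : (∑ r ∈ range m, ∑ r' ∈ range m, ∑ t ∈ range m,
        ζ ^ (s.val * t + r * r') *
          (if ((a, τ) : ZMod m × Equiv.Perm (Fin n)) = ((r' : ZMod m), σ * π ^ ((r + t) % m))
            then 1 else 0)) = 0 := by
      refine sum_eq_zero fun r _ => sum_eq_zero fun r' _ => sum_eq_zero fun t _ => ?_
      rw [if_neg, mul_zero]
      intro h
      exact hEx _ (Nat.mod_lt _ (by omega)) (congrArg Prod.snd h)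
    have hRHS : (∑ t ∈ range m, ζ ^ (s.val * t) * (if τ = σ * π ^ t then 1 else 0)) = 0 := by
      refine sum_eq_zero fun t ht => ?_
      rw [if_neg (hEx t (mem_range.mp ht)), mul_zero]
    rw [hLHS, hRHS]
    ring
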